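/- arXiv:2109.08573 — 3 statements merged into one kernel-verified Lean document; each statement's English description precedes it below -/
import Mathlib

section
/- Let ℳ be a finite set with at least two elements. For each M ∈ ℳ let Ẑ^M be a real-valued random variable on a common probability space, the family (Ẑ^M)_{M∈ℳ} being mutually independent, with E[Ẑ^M] = Z^M and Var(Ẑ^M) ≤ σ*² for a common finite constant σ*² > 0. Suppose M* ∈ ℳ is the unique maximiser of M ↦ Z^M, and set Δ = min_{L ≠ M*} (Z^{M*} − Z^L) > 0. Then the probability that Ẑ^{M*} > Ẑ^L simultaneously for every L ≠ M* is at least 1 − (|ℳ| − 1)·(1 + Δ²/(2σ*²))^{−1}. -/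
open MeasureTheory ProbabilityTheory

lemma my_cantelli {Ω : Type*} [MeasurableSpace Ω] (μ : Measure Ω) [IsProbabilityMeasure μ]
    {X : Ω → ℝ} (hX : MemLp X 2 μ) {t : ℝ} (ht : 0 < t) :
    (μ {ω | t ≤ X ω - ∫ x, X x ∂μ}).toReal ≤
      variance X μ / (variance X μ + t ^ 2) := by
  set m := ∫ x, X x ∂μ with hm
  set v := variance X μ with hv
  have hv0 : 0 ≤ v := variance_nonneg X μ
  set u := v / t with hu
  have hu0 : 0 ≤ u := div_nonneg hv0 ht.le
  have htu : 0 < t + u := by positivity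
  have hYm : MemLp (fun ω => X ω - m + u) 2 μ :=
    (hX.sub (memLp_const m)).add (memLp_const u)
  have hf_int : Integrable (fun ω => (X ω - m + u) ^ 2) μ := by
    simpa using hYm.integrable_sq
  have hEint : Integrable X μ := hX.integrable one_le_two
  have hint2 : Integrable (fun ω => (X ω - m) ^ 2) μ := by
    simpa using (hX.sub (memLp_const m)).integrable_sq
  have hvar_eq : v = ∫ ω, (X ω - m) ^ 2 ∂μ := by
    rw [hv, variance_eq_integral hX.aestronglyMeasurable.aemeasurable]
  have hEf : ∫ ω, (X ω - m + u) ^ 2 ∂μ = v + u ^ 2 := by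
    have h1 : (fun ω => (X ω - m + u) ^ 2)
        = fun ω => (X ω - m) ^ 2 + ((2 * u) * (X ω - m) + u ^ 2) := by
      funext ω; ring
    have i1 : Integrable (fun ω => 2 * u * (X ω - m)) μ :=
      (hEint.sub (integrable_const m)).const_mul _
    have i2 : Integrable (fun ω => 2 * u * (X ω - m) + u ^ 2) μ := i1.add (integrable_const _)
    rw [h1, integral_add hint2 i2,
      integral_add i1 (integrable_const _), MeasureTheory.integral_const_mul,
      integral_sub hEint (integrable_const m)]
    simp [hm, ← hvar_eq]
    rw [← hm]; exact hvar_eq.symm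
  have hkey := mul_meas_ge_le_integral_of_nonneg
    (Filter.Eventually.of_forall fun ω => sq_nonneg (X ω - m + u)) hf_int ((t + u) ^ 2)
  rw [hEf] at hkey
  have hsub : {ω | t ≤ X ω - m} ⊆ {x | (t + u) ^ 2 ≤ (X x - m + u) ^ 2} := by
    intro ω hω
    exact pow_le_pow_left₀ htu.le (by linarith [Set.mem_setOf_eq ▸ hω]) 2
  have hmono : (μ {ω | t ≤ X ω - m}).toReal ≤ (μ {x | (t + u) ^ 2 ≤ (X x - m + u) ^ 2}).toReal :=
    ENNReal.toReal_mono (measure_ne_top _ _) (measure_mono hsub)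
  have h2 : (μ {x | (t + u) ^ 2 ≤ (X x - m + u) ^ 2}).toReal ≤ (v + u ^ 2) / (t + u) ^ 2 := by
    rw [le_div_iff₀ (by positivity)]
    rw [Measure.real_def] at hkey
    linarith [hkey]
  have h3 : (v + u ^ 2) / (t + u) ^ 2 = v / (v + t ^ 2) := by
    rw [hu]
    have ht' : t ≠ 0 := ht.ne'
    have hvt : v + t ^ 2 ≠ 0 := by positivity
    field_simp
    ring
  calc (μ {ω | t ≤ X ω - m}).toReal ≤ (v + u ^ 2) / (t + u) ^ 2 := hmono.trans h2
    _ = v / (v + t ^ 2) := h3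

lemma variance_sub_of_indep {Ω : Type*} [MeasurableSpace Ω] (μ : Measure Ω)
    [IsProbabilityMeasure μ] {X Y : Ω → ℝ} (hX : MemLp X 2 μ) (hY : MemLp Y 2 μ)
    (h : IndepFun X Y μ) :
    variance (fun ω => X ω - Y ω) μ = variance X μ + variance Y μ := by
  have h1 : (fun ω => X ω - Y ω) = X + (-Y) := by funext ω; simp [sub_eq_add_neg]
  rw [h1, IndepFun.variance_add hX hY.neg h.neg_right]
  congr 1
  have h2 : (-Y) = (-1 : ℝ) • Y := by funext ω; simp
  rw [h2, variance_smul]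
  norm_num

/-- Probability of selecting the correct model by maximising independent unbiased
marginal-likelihood estimators, with a uniform variance bound `σsq`:
`P(Ẑ^{M*} > Ẑ^L for all L ≠ M*) ≥ 1 − (|ℳ| − 1)·(1 + Δ²/(2σ*²))⁻¹`. -/
theorem model_selection_probability_bound
    {Ω : Type*} [MeasurableSpace Ω] (μ : Measure Ω) [IsProbabilityMeasure μ]
    {𝓜 : Type*} [Fintype 𝓜] [DecidableEq 𝓜]
    (hcard : 2 ≤ Fintype.card 𝓜)
    (Zhat : 𝓜 → Ω → ℝ)
    (hmeas : ∀ m, Measurable (Zhat m))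
    (hL2 : ∀ m, MemLp (Zhat m) 2 μ)
    (hindep : iIndepFun Zhat μ)
    (Z : 𝓜 → ℝ) (hZ : ∀ m, ∫ ω, Zhat m ω ∂μ = Z m)
    (σsq : ℝ) (hσsq : 0 < σsq)
    (hvar : ∀ m, variance (Zhat m) μ ≤ σsq)
    (Mstar : 𝓜)
    (hmax : ∀ L, L ≠ Mstar → Z L < Z Mstar)
    (hne : (Finset.univ.erase Mstar).Nonempty)
    (Δ : ℝ)
    (hΔ : Δ = (Finset.univ.erase Mstar).inf' hne (fun L => Z Mstar - Z L)) :
    1 - ((Fintype.card 𝓜 : ℝ) - 1) * (1 + Δ ^ 2 / (2 * σsq))⁻¹ ≤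
      (μ {ω | ∀ L, L ≠ Mstar → Zhat L ω < Zhat Mstar ω}).toReal := by
  classical
  set E := Finset.univ.erase Mstar with hE
  have hΔpos : 0 < Δ := by
    rw [hΔ, Finset.lt_inf'_iff]
    intro L hL
    have := hmax L (Finset.ne_of_mem_erase hL)
    linarith
  have hΔle : ∀ L ∈ E, Δ ≤ Z Mstar - Z L := fun L hL => hΔ ▸ Finset.inf'_le _ hL
  set b : ℝ := (1 + Δ ^ 2 / (2 * σsq))⁻¹ with hb
  have hbpos : 0 < b := by rw [hb]; positivity
  have key : ∀ L ∈ E, (μ {ω | Zhat Mstar ω ≤ Zhat L ω}).toReal ≤ b := by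
    intro L hL
    have hLne : L ≠ Mstar := Finset.ne_of_mem_erase hL
    set X := fun ω => Zhat L ω - Zhat Mstar ω with hX
    have hXm : MemLp X 2 μ := (hL2 L).sub (hL2 Mstar)
    have hEX : ∫ ω, X ω ∂μ = Z L - Z Mstar := by
      rw [hX, integral_sub ((hL2 L).integrable one_le_two)
        ((hL2 Mstar).integrable one_le_two), hZ, hZ]
    set t := Z Mstar - Z L with hT
    have ht : 0 < t := by have := hmax L hLne; simp only [hT]; linarith
    have hset : {ω | Zhat Mstar ω ≤ Zhat L ω} = {ω | t ≤ X ω - ∫ x, X x ∂μ} := by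
      ext ω
      simp only [Set.mem_setOf_eq, hEX, hX, hT]
      constructor <;> intro <;> linarith
    have hvX : variance X μ ≤ 2 * σsq := by
      rw [hX, variance_sub_of_indep μ (hL2 L) (hL2 Mstar) (hindep.indepFun hLne)]
      linarith [hvar L, hvar Mstar]
    have hc := my_cantelli μ hXm ht
    rw [hset]
    refine hc.trans ?_
    have hv0 : 0 ≤ variance X μ := variance_nonneg X μ
    have hΔt : Δ ≤ t := hΔle L hL
    have h1 : variance X μ / (variance X μ + t ^ 2) ≤ 2 * σsq / (2 * σsq + Δ ^ 2) := by
      rw [div_le_div_iff₀ (by positivity) (by positivity)]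
      nlinarith [sq_nonneg t, sq_nonneg Δ, mul_le_mul_of_nonneg_left (sq_le_sq' (by linarith) hΔt) hσsq.le]
    have h2 : 2 * σsq / (2 * σsq + Δ ^ 2) = b := by
      rw [hb]
      rw [inv_eq_one_div]
      field_simp
    linarith
  set A := {ω | ∀ L, L ≠ Mstar → Zhat L ω < Zhat Mstar ω} with hA
  have hAmeas : MeasurableSet A := by
    have : A = ⋂ L, ⋂ (_ : L ≠ Mstar), {ω | Zhat L ω < Zhat Mstar ω} := by
      ext ω; simp [hA]
    rw [this]
    exact MeasurableSet.iInter fun L => MeasurableSet.iInter fun _ =>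
      measurableSet_lt (hmeas L) (hmeas Mstar)
  have hAc : Aᶜ = ⋃ L ∈ E, {ω | Zhat Mstar ω ≤ Zhat L ω} := by
    ext ω
    simp only [hA, hE, Set.mem_compl_iff, Set.mem_setOf_eq, Set.mem_iUnion,
      Finset.mem_erase, Finset.mem_univ, and_true, not_forall, not_lt]
  have hsum : (μ Aᶜ).toReal ≤ ∑ L ∈ E, (μ {ω | Zhat Mstar ω ≤ Zhat L ω}).toReal := by
    rw [hAc, ← ENNReal.toReal_sum (fun L _ => measure_ne_top μ _)]
    exact ENNReal.toReal_mono
      (ENNReal.sum_ne_top.2 fun L _ => measure_ne_top μ _)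
      (measure_biUnion_finset_le E _)
  have hcardE : (E.card : ℝ) = (Fintype.card 𝓜 : ℝ) - 1 := by
    rw [hE, Finset.card_erase_of_mem (Finset.mem_univ _), Finset.card_univ]
    have h1 : 1 ≤ Fintype.card 𝓜 := by omega
    push_cast [Nat.cast_sub h1]
    ring
  have hsum2 : ∑ L ∈ E, (μ {ω | Zhat Mstar ω ≤ Zhat L ω}).toReal
      ≤ ((Fintype.card 𝓜 : ℝ) - 1) * b := by
    calc ∑ L ∈ E, (μ {ω | Zhat Mstar ω ≤ Zhat L ω}).toReal
        ≤ ∑ _L ∈ E, b := Finset.sum_le_sum key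
      _ = (E.card : ℝ) * b := by rw [Finset.sum_const, nsmul_eq_mul]
      _ = ((Fintype.card 𝓜 : ℝ) - 1) * b := by rw [hcardE]
  have hcompl : (μ Aᶜ).toReal = 1 - (μ A).toReal := by
    rw [prob_compl_eq_one_sub hAmeas,
      ENNReal.toReal_sub_of_le prob_le_one ENNReal.one_ne_top, ENNReal.toReal_one]
  have := hsum.trans hsum2
  rw [hcompl] at this
  linarith
end

section
/- Let ℳ be a finite set with at least two elements. For each M ∈ ℳ let Ẑ^M be a real-valued random variable on a common probability space, the family (Ẑ^M)_{M∈ℳ} being mutually independent and square-integrable, with E[Ẑ^M] = Z^M and Var(Ẑ^M) = σ_M² < ∞. Suppose M* ∈ ℳ is the unique maximiser of M ↦ Z^M. Then P(Ẑ^{M*} > Ẑ^L for all L ≠ M*) ≥ 1 − Σ_{L ≠ M*} (1 + (Z^{M*} − Z^L)²/(σ_{M*}² + σ_L²))^{−1}. -/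
open MeasureTheory ProbabilityTheory

/-- Cantelli's one-sided inequality. -/
lemma cantelli {Ω : Type*} [MeasurableSpace Ω] (μ : Measure Ω) [IsProbabilityMeasure μ]
    {Y : Ω → ℝ} (hY : MemLp Y 2 μ) {t : ℝ} (ht : 0 < t) :
    (μ {ω | (∫ ω, Y ω ∂μ) + t ≤ Y ω}).toReal ≤
      variance Y μ / (variance Y μ + t ^ 2) := by
  set m := ∫ ω, Y ω ∂μ with hm
  set v := variance Y μ with hv
  have hv0 : 0 ≤ v := variance_nonneg _ _
  set u := v / t with hu
  have hu0 : 0 ≤ u := div_nonneg hv0 ht.le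
  set f : Ω → ℝ := fun ω => (Y ω - m + u) ^ 2 with hf
  have hmem : MemLp (fun ω => Y ω - m + u) 2 μ :=
    (hY.sub (memLp_const m)).add (memLp_const u)
  have hf_int : Integrable f μ := hmem.integrable_sq
  have hint1 : Integrable (fun ω => (Y ω - m) ^ 2) μ :=
    (hY.sub (memLp_const m)).integrable_sq
  have hint2 : Integrable (fun ω => Y ω - m) μ :=
    ((hY.integrable one_le_two).sub (integrable_const m))
  have hintf : ∫ ω, f ω ∂μ = v + u ^ 2 := by
    have hexp : f = fun ω => (Y ω - m) ^ 2 + (2 * u) * (Y ω - m) + u ^ 2 := by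
      funext ω; ring
    rw [hexp]
    have e1 : ∫ ω, ((Y ω - m) ^ 2 + 2 * u * (Y ω - m) + u ^ 2) ∂μ
        = (∫ ω, ((Y ω - m) ^ 2 + 2 * u * (Y ω - m)) ∂μ) + ∫ _ω, u ^ 2 ∂μ :=
      integral_add (hint1.add (hint2.const_mul _)) (integrable_const _)
    have e2 : ∫ ω, ((Y ω - m) ^ 2 + 2 * u * (Y ω - m)) ∂μ
        = (∫ ω, (Y ω - m) ^ 2 ∂μ) + ∫ ω, 2 * u * (Y ω - m) ∂μ :=
      integral_add hint1 (hint2.const_mul _)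
    have e3 : ∫ ω, 2 * u * (Y ω - m) ∂μ = 2 * u * ∫ ω, (Y ω - m) ∂μ :=
      integral_const_mul _ _
    have e4 : ∫ ω, (Y ω - m) ∂μ = 0 := by
      rw [integral_sub (hY.integrable one_le_two) (integrable_const m)]
      simp [hm]
    rw [e1, e2, e3, e4, integral_const]
    have hvar : v = ∫ ω, (Y ω - m) ^ 2 ∂μ := by
      rw [hv, variance_eq_integral hY.aestronglyMeasurable.aemeasurable]
    simp [← hvar, mul_comm]
  have hsub : {ω | m + t ≤ Y ω} ⊆ {ω | (t + u) ^ 2 ≤ f ω} := by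
    intro ω hω
    simp only [Set.mem_setOf_eq] at hω ⊢
    have h1 : t + u ≤ Y ω - m + u := by linarith
    have h2 : 0 ≤ t + u := by positivity
    exact pow_le_pow_left₀ h2 h1 2
  have hmarkov : (t + u) ^ 2 * (μ {ω | (t + u) ^ 2 ≤ f ω}).toReal ≤ ∫ ω, f ω ∂μ :=
    mul_meas_ge_le_integral_of_nonneg (ae_of_all _ fun ω => sq_nonneg _) hf_int _
  have hmono : (μ {ω | m + t ≤ Y ω}).toReal ≤ (μ {ω | (t + u) ^ 2 ≤ f ω}).toReal :=
    ENNReal.toReal_mono (measure_ne_top _ _) (measure_mono hsub)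
  have htu : (0:ℝ) < (t + u) ^ 2 := by positivity
  have key : (μ {ω | m + t ≤ Y ω}).toReal ≤ (v + u ^ 2) / (t + u) ^ 2 := by
    rw [le_div_iff₀ htu]
    calc (μ {ω | m + t ≤ Y ω}).toReal * (t + u) ^ 2
        ≤ (μ {ω | (t + u) ^ 2 ≤ f ω}).toReal * (t + u) ^ 2 := by
          exact mul_le_mul_of_nonneg_right hmono htu.le
      _ ≤ v + u ^ 2 := by rw [mul_comm]; rw [hintf] at hmarkov; exact hmarkov
  refine key.trans (le_of_eq ?_)
  rw [hu]
  have ht' : (t:ℝ) ≠ 0 := ht.ne'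
  have hden : v + t ^ 2 ≠ 0 := by positivity
  field_simp
  ring

/-- Probability of selecting the correct model by maximising independent unbiased
marginal-likelihood estimators with per-model variances `σ_M²`:
`P(Ẑ^{M*} > Ẑ^L ∀ L ≠ M*) ≥ 1 − Σ_{L ≠ M*} (1 + (Z^{M*} − Z^L)²/(σ_{M*}² + σ_L²))⁻¹`,
where each summand `(1 + d²/s)⁻¹` is written in the equivalent form `s/(s + d²)`, which
realises the stated convention that the summand is `0` when `s = σ_{M*}² + σ_L² = 0`. -/
theorem model_selection_probability_bound_sum
    {Ω : Type*} [MeasurableSpace Ω] (μ : Measure Ω) [IsProbabilityMeasure μ]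
    {𝓜 : Type*} [Fintype 𝓜] [DecidableEq 𝓜]
    (hcard : 2 ≤ Fintype.card 𝓜)
    (Zhat : 𝓜 → Ω → ℝ)
    (hmeas : ∀ m, Measurable (Zhat m))
    (hL2 : ∀ m, MemLp (Zhat m) 2 μ)
    (hindep : iIndepFun Zhat μ)
    (Z : 𝓜 → ℝ) (hZ : ∀ m, ∫ ω, Zhat m ω ∂μ = Z m)
    (Mstar : 𝓜)
    (hmax : ∀ L, L ≠ Mstar → Z L < Z Mstar) :
    1 - ∑ L ∈ Finset.univ.erase Mstar,
        (variance (Zhat Mstar) μ + variance (Zhat L) μ) /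
          ((variance (Zhat Mstar) μ + variance (Zhat L) μ) + (Z Mstar - Z L) ^ 2) ≤
      (μ {ω | ∀ L, L ≠ Mstar → Zhat L ω < Zhat Mstar ω}).toReal := by
  classical
  set S : Set Ω := {ω | ∀ L, L ≠ Mstar → Zhat L ω < Zhat Mstar ω} with hS
  have hScompl : Sᶜ = ⋃ L ∈ Finset.univ.erase Mstar, {ω | Zhat Mstar ω ≤ Zhat L ω} := by
    ext ω
    simp only [hS, Set.mem_compl_iff, Set.mem_setOf_eq, not_forall, Set.mem_iUnion,
      Finset.mem_erase, Finset.mem_univ, and_true, exists_prop, not_lt]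
  have hSmeas : MeasurableSet S := by
    have : S = ⋂ L ∈ Finset.univ.erase Mstar, {ω | Zhat L ω < Zhat Mstar ω} := by
      ext ω
      simp only [hS, Set.mem_setOf_eq, Set.mem_iInter, Finset.mem_erase, Finset.mem_univ,
        and_true]
    rw [this]
    exact MeasurableSet.biInter (Finset.univ.erase Mstar).countable_toSet
      fun L _ => measurableSet_lt (hmeas L) (hmeas Mstar)
  -- per-term bound via Cantelli
  have hterm : ∀ L ∈ Finset.univ.erase Mstar,
      (μ {ω | Zhat Mstar ω ≤ Zhat L ω}).toReal ≤
        (variance (Zhat Mstar) μ + variance (Zhat L) μ) /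
          ((variance (Zhat Mstar) μ + variance (Zhat L) μ) + (Z Mstar - Z L) ^ 2) := by
    intro L hL
    have hLne : L ≠ Mstar := (Finset.mem_erase.mp hL).1
    set Y : Ω → ℝ := fun ω => Zhat L ω + (-1 : ℝ) * Zhat Mstar ω with hY
    have hYmem : MemLp Y 2 μ := (hL2 L).add (((hL2 Mstar).const_mul (-1)))
    have hind : IndepFun (Zhat L) (Zhat Mstar) μ := hindep.indepFun hLne
    have hvarY : variance Y μ = variance (Zhat Mstar) μ + variance (Zhat L) μ := by
      have h1 : IndepFun (Zhat L) (fun ω => (-1 : ℝ) * Zhat Mstar ω) μ := by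
        have := hind.comp measurable_id (measurable_const_mul (-1 : ℝ))
        exact this
      have h2 : MemLp (fun ω => (-1 : ℝ) * Zhat Mstar ω) 2 μ := (hL2 Mstar).const_mul _
      have := IndepFun.variance_add (hL2 L) h2 h1
      rw [hY]
      have hmul := variance_const_mul (-1 : ℝ) (Zhat Mstar) μ
      calc variance (fun ω => Zhat L ω + (-1 : ℝ) * Zhat Mstar ω) μ
          = variance (Zhat L + fun ω => (-1 : ℝ) * Zhat Mstar ω) μ := rfl
        _ = variance (Zhat L) μ + variance (fun ω => (-1 : ℝ) * Zhat Mstar ω) μ := this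
        _ = variance (Zhat Mstar) μ + variance (Zhat L) μ := by rw [hmul]; ring
    have hmeanY : ∫ ω, Y ω ∂μ = Z L - Z Mstar := by
      rw [hY]
      rw [integral_add ((hL2 L).integrable one_le_two)
        (((hL2 Mstar).integrable one_le_two).const_mul _), integral_const_mul]
      rw [hZ, hZ]; ring
    have ht : (0:ℝ) < Z Mstar - Z L := sub_pos.mpr (hmax L hLne)
    have hcant := cantelli μ hYmem ht
    rw [hmeanY, hvarY] at hcant
    have hsets : {ω | Zhat Mstar ω ≤ Zhat L ω} = {ω | Z L - Z Mstar + (Z Mstar - Z L) ≤ Y ω} := by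
      ext ω; simp only [Set.mem_setOf_eq, hY]; constructor <;> intro h <;> linarith
    rw [hsets]
    exact hcant
  -- union bound
  have hunion : (μ Sᶜ).toReal ≤ ∑ L ∈ Finset.univ.erase Mstar,
      (μ {ω | Zhat Mstar ω ≤ Zhat L ω}).toReal := by
    rw [hScompl]
    have h1 : μ (⋃ L ∈ Finset.univ.erase Mstar, {ω | Zhat Mstar ω ≤ Zhat L ω}) ≤
        ∑ L ∈ Finset.univ.erase Mstar, μ {ω | Zhat Mstar ω ≤ Zhat L ω} :=
      measure_biUnion_finset_le _ _
    have h2 : (∑ L ∈ Finset.univ.erase Mstar, μ {ω | Zhat Mstar ω ≤ Zhat L ω}) ≠ ⊤ :=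
      ENNReal.sum_ne_top.mpr fun L _ => measure_ne_top _ _
    calc (μ (⋃ L ∈ Finset.univ.erase Mstar, {ω | Zhat Mstar ω ≤ Zhat L ω})).toReal
        ≤ (∑ L ∈ Finset.univ.erase Mstar, μ {ω | Zhat Mstar ω ≤ Zhat L ω}).toReal :=
          ENNReal.toReal_mono h2 h1
      _ = ∑ L ∈ Finset.univ.erase Mstar, (μ {ω | Zhat Mstar ω ≤ Zhat L ω}).toReal :=
          ENNReal.toReal_sum fun L _ => measure_ne_top _ _
  have hcomplval : (μ Sᶜ).toReal = 1 - (μ S).toReal := by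
    rw [measure_compl hSmeas (measure_ne_top _ _)]
    rw [ENNReal.toReal_sub_of_le (measure_mono (Set.subset_univ _)) (measure_ne_top _ _)]
    simp
  have hsum := Finset.sum_le_sum hterm
  rw [hcomplval] at hunion
  linarith [hunion.trans hsum]
end

section
/- Let V and ℳ be nonempty finite sets. For each v ∈ V and m ∈ ℳ, let g_v(·|m) be a measurable nonnegative function on ℝ with ∫_ℝ g_v(z|m) dz = 1, such that z ↦ z·g_v(z|m) is integrable with ∫_ℝ z·g_v(z|m) dz = Z_v(m) > 0. Let p : ℳ^V → [0,∞) with C = Σ_{M'∈ℳ^V} p(M')·∏_{v∈V} Z_v(M'_v) > 0 and μ(M) = p(M)·∏_{v∈V} Z_v(M_v)/C. Define the multiply-augmented target on ℳ^V × ℝ^{V×ℳ} by μ̄(M, z̄) = (p(M)/C)·∏_{v∈V} [ z̄(v, M_v)·∏_{m'∈ℳ} g_v(z̄(v, m') | m') ]. Then for every M ∈ ℳ^V, ∫_{ℝ^{V×ℳ}} μ̄(M, z̄) dz̄ = μ(M), where the integral is with respect to the product Lebesgue measure on ℝ^{V×ℳ}. -/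
open MeasureTheory

/-- Integrating out all augmenting estimator values from the multiply-augmented target
`μ̄(M, z̄) = (p(M)/C)·∏_v [ z̄(v, M_v)·∏_{m'} g_v(z̄(v, m') | m') ]` recovers the model
posterior `μ(M) = p(M)·∏_v Z_v(M_v)/C`. -/
theorem multiply_augmented_target_marginal
    {V 𝓜 : Type*} [Fintype V] [DecidableEq V] [Nonempty V]
    [Fintype 𝓜] [DecidableEq 𝓜] [Nonempty 𝓜]
    (g : V → 𝓜 → ℝ → ℝ)
    (hgmeas : ∀ v m, Measurable (g v m))
    (hgnonneg : ∀ v m z, 0 ≤ g v m z)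
    (hgprob : ∀ v m, ∫ z, g v m z = 1)
    (Z : V → 𝓜 → ℝ)
    (hZpos : ∀ v m, 0 < Z v m)
    (hint : ∀ v m, Integrable (fun z => z * g v m z))
    (hunbiased : ∀ v m, ∫ z, z * g v m z = Z v m)
    (p : (V → 𝓜) → ℝ) (hp : ∀ c, 0 ≤ p c)
    (C : ℝ)
    (hC : C = ∑ c : V → 𝓜, p c * ∏ v, Z v (c v))
    (hCpos : 0 < C)
    (Mconf : V → 𝓜) :
    ∫ zbar : V × 𝓜 → ℝ,
        (p Mconf / C) *
          ∏ v, (zbar (v, Mconf v) * ∏ m' : 𝓜, g v m' (zbar (v, m')))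
        ∂(Measure.pi fun _ : V × 𝓜 => volume) =
      p Mconf * (∏ v, Z v (Mconf v)) / C := by
  classical
  set F : V × 𝓜 → ℝ → ℝ := fun vm z =>
    if vm.2 = Mconf vm.1 then z * g vm.1 vm.2 z else g vm.1 vm.2 z with hF
  have hprod : ∀ zbar : V × 𝓜 → ℝ,
      (∏ v, (zbar (v, Mconf v) * ∏ m' : 𝓜, g v m' (zbar (v, m')))) =
        ∏ vm : V × 𝓜, F vm (zbar vm) := by
    intro zbar
    rw [Fintype.prod_prod_type]
    refine Finset.prod_congr rfl fun v _ => ?_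
    have : ∀ m' : 𝓜, F (v, m') (zbar (v, m')) =
        (if m' = Mconf v then zbar (v, m') else 1) * g v m' (zbar (v, m')) := by
      intro m'; simp only [hF]; split <;> simp
    simp_rw [this, Finset.prod_mul_distrib, Finset.prod_ite_eq' Finset.univ (Mconf v)
      (fun m' => zbar (v, m')), Finset.mem_univ, if_true]
  have hFint : ∀ vm : V × 𝓜, (∫ z, F vm z) =
      if vm.2 = Mconf vm.1 then Z vm.1 vm.2 else 1 := by
    rintro ⟨v, m⟩
    simp only [hF]
    split
    · exact hunbiased v m
    · exact hgprob v m
  calc ∫ zbar : V × 𝓜 → ℝ,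
        (p Mconf / C) * ∏ v, (zbar (v, Mconf v) * ∏ m' : 𝓜, g v m' (zbar (v, m')))
        ∂(Measure.pi fun _ : V × 𝓜 => volume)
      = (p Mconf / C) * ∫ zbar : V × 𝓜 → ℝ, ∏ vm : V × 𝓜, F vm (zbar vm)
          ∂(Measure.pi fun _ : V × 𝓜 => volume) := by
        simp_rw [hprod]; exact integral_const_mul _ _
    _ = (p Mconf / C) * ∏ vm : V × 𝓜, ∫ z, F vm z := by
        rw [show (Measure.pi fun _ : V × 𝓜 => volume) = (volume : Measure (V × 𝓜 → ℝ)) from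
          (volume_pi).symm]
        rw [MeasureTheory.integral_fintype_prod_volume_eq_prod F]
    _ = (p Mconf / C) * ∏ v, Z v (Mconf v) := by
        simp_rw [hFint]
        rw [Fintype.prod_prod_type]
        congr 1
        refine Finset.prod_congr rfl fun v _ => ?_
        simp [Finset.prod_ite_eq' Finset.univ (Mconf v) (fun m' => Z v m')]
    _ = p Mconf * (∏ v, Z v (Mconf v)) / C := by ring
end
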